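/- Let P ∈ ARI be a polynomial-valued mould. Then the mould Darit(P)·B is polynomial-valued if and only if P is push-invariant, where B is the mould concentrated in depth 1 with B(u_1) = 1. -/

import Mathlib

/-!
Moulds are modelled as families `P = (P_r)_{r ≥ 0}` of ℚ-valued functions of `r`
rational variables; identities of rational functions are expressed as pointwise
identities, guarded (where divisions genuinely occur) by the genericity
condition that all consecutive block sums of the variables are nonzero.
-/

/-- A mould: for each depth `r`, a function of `r` variables `u_1, …, u_r`. -/
abbrev Mould : Type := (r : ℕ) → (Fin r → ℚ) → ℚ

namespace Mould

/-- Membership in `ARI`: vanishing constant term (depth-0 part equal to `0`). -/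
def MemARI (P : Mould) : Prop := ∀ u : Fin 0 → ℚ, P 0 u = 0

/-- The first `i` letters of the word `u`. -/
def take {r : ℕ} (u : Fin r → ℚ) (i : ℕ) (h : i ≤ r) : Fin i → ℚ :=
  fun j => u ⟨j.1, by have := j.2; omega⟩

/-- The letters of the word `u` from position `i` on. -/
def drop {r : ℕ} (u : Fin r → ℚ) (i : ℕ) : Fin (r - i) → ℚ :=
  fun j => u ⟨i + j.1, by have := j.2; omega⟩

/-- Mould multiplication `mu`. -/
def mu (P Q : Mould) : Mould := fun r u =>
  ∑ i : Fin (r + 1), P i.1 (take u i.1 (by have := i.2; omega)) * Q (r - i.1) (drop u i.1)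

/-- The bracket `lu` associated to `mu`. -/
def lu (P Q : Mould) : Mould := fun r u => mu P Q r u - mu Q P r u

/-- `dur`: multiplication by `u_1 + ⋯ + u_r`. -/
def dur (P : Mould) : Mould := fun r u => (∑ j, u j) * P r u

/-- `dar`: multiplication by `u_1 ⋯ u_r`. -/
def dar (P : Mould) : Mould := fun r u => (∏ j, u j) * P r u

/-- `dur⁻¹`: division by `u_1 + ⋯ + u_r`. -/
def durInv (P : Mould) : Mould := fun r u => P r u / (∑ j, u j)

/-- `dar⁻¹`: division by `u_1 ⋯ u_r`. -/
def darInv (P : Mould) : Mould := fun r u => P r u / (∏ j, u j)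

/-- `Δ = dar ∘ dur`: multiplication by `u_1 ⋯ u_r (u_1 + ⋯ + u_r)`. -/
def delta (P : Mould) : Mould := dar (dur P)

/-- `Δ⁻¹`: division by `u_1 ⋯ u_r (u_1 + ⋯ + u_r)`. -/
def deltaInv (P : Mould) : Mould := darInv (durInv P)

/-- The word `a⌈c`, for the decomposition `a = (u_1,…,u_i)`, `b = (u_{i+1},…,u_k)`,
`c = (u_{k+1},…,u_r)` (0-indexed: `a` = positions `< i`, `b` = positions `i..k-1`,
`c` = positions `k..r-1`): `a` followed by `c` with the sum of the letters of `b`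
added to the first letter of `c`. -/
def flexUpper {r : ℕ} (u : Fin r → ℚ) (i k : ℕ) (hik : i < k) (hkr : k < r) :
    Fin (i + (r - k)) → ℚ := fun j =>
  if hj : j.1 < i then u ⟨j.1, by omega⟩
  else if hj2 : j.1 = i then ∑ m : Fin (k + 1 - i), u ⟨i + m.1, by have := m.2; omega⟩
  else u ⟨k + (j.1 - i), by have := j.2; omega⟩

/-- The word `a⌉c`: `a` with the sum of the letters of `b` added to its last letter,
followed by `c`. -/
def flexLower {r : ℕ} (u : Fin r → ℚ) (i k : ℕ) (hi : 0 < i) (hik : i < k) (hkr : k ≤ r) :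
    Fin (i + (r - k)) → ℚ := fun j =>
  if hj : j.1 < i - 1 then u ⟨j.1, by omega⟩
  else if hj2 : j.1 = i - 1 then
    ∑ m : Fin (k - (i - 1)), u ⟨(i - 1) + m.1, by have := m.2; omega⟩
  else u ⟨k + (j.1 - i), by have := j.2; omega⟩

/-- The middle word `b = (u_{i+1},…,u_k)` of a decomposition. -/
def blockWord {r : ℕ} (u : Fin r → ℚ) (i k : ℕ) (h : k ≤ r) : Fin (k - i) → ℚ :=
  fun m => u ⟨i + m.1, by have := m.2; omega⟩

/-- Ecalle's derivation `arit(P)` applied to `M`: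
`(arit(P)·M)(u) = Σ M(a⌈c)P(b) − Σ M(a⌉c)P(b)`, the first sum over decompositions
with `b, c` nonempty, the second over decompositions with `a, b` nonempty. -/
def arit (P M : Mould) : Mould := fun r u =>
  (∑ i : Fin (r + 1), ∑ k : Fin (r + 1),
    if h : i.1 < k.1 ∧ k.1 < r then
      M (i.1 + (r - k.1)) (flexUpper u i.1 k.1 h.1 h.2)
        * P (k.1 - i.1) (blockWord u i.1 k.1 (le_of_lt h.2))
    else 0)
  - ∑ i : Fin (r + 1), ∑ k : Fin (r + 1),
    if h : 0 < i.1 ∧ i.1 < k.1 ∧ k.1 ≤ r then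
      M (i.1 + (r - k.1)) (flexLower u i.1 k.1 h.1 h.2.1 h.2.2)
        * P (k.1 - i.1) (blockWord u i.1 k.1 h.2.2)
    else 0

/-- `Darit(P) = −dar ∘ (arit(Δ⁻¹(P)) − ad(Δ⁻¹(P))) ∘ dar⁻¹`, where `ad(X)·Y = lu(X,Y)`. -/
def Darit (P Q : Mould) : Mould := fun r u =>
  -(dar (fun s v => arit (deltaInv P) (darInv Q) s v - lu (deltaInv P) (darInv Q) s v) r u)

/-- The `ari`-bracket: `ari(P,Q) = arit(Q)·P − arit(P)·Q + lu(P,Q)`. -/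
def ari (P Q : Mould) : Mould := fun r u =>
  arit Q P r u - arit P Q r u + lu P Q r u

/-- The `Dari`-bracket: `Dari(P,Q) = Darit(P)·Q − Darit(Q)·P`. -/
def Dari (P Q : Mould) : Mould := fun r u => Darit P Q r u - Darit Q P r u

/-- The `push` operator: `push(P)(u_1,…,u_r) = P(−u_1−⋯−u_r, u_1,…,u_{r−1})`. -/
def push (P : Mould) : Mould := fun r u =>
  P r (fun j => if j.1 = 0 then -(∑ k, u k) else u ⟨j.1 - 1, by have := j.2; omega⟩)

/-- The `swap` operator: `swap(P)(v_1,…,v_r) = P(v_r, v_{r−1}−v_r, …, v_1−v_2)`. -/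
def swap (P : Mould) : Mould := fun r u =>
  P r (fun j =>
    if hj : j.1 = 0 then u ⟨r - 1, by have := j.2; omega⟩
    else u ⟨r - 1 - j.1, by have := j.2; omega⟩ - u ⟨r - j.1, by have := j.2; omega⟩)

/-- The mould `B = ma(b)` concentrated in depth 1, with `B(u_1) = 1`. -/
def Bm : Mould := fun r _ => if r = 1 then 1 else 0

/-- The mould `B₁ = ma([b,a])` concentrated in depth 1, with `B₁(u_1) = u_1`. -/
def B1 : Mould := fun r u => if h : r = 1 then u ⟨0, by omega⟩ else 0

/-- A tuple of variables is *generic* when every consecutive block sum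
`u_{i+1} + ⋯ + u_{j+1}` (`0 ≤ i ≤ j < r`) is nonzero; two rational-function
valued moulds are equal iff they agree at all generic tuples, and all
denominators occurring in the flexion operations are such block sums. -/
def Generic {r : ℕ} (u : Fin r → ℚ) : Prop :=
  ∀ (i j : ℕ) (_ : i ≤ j) (_ : j < r),
    (∑ m : Fin (j + 1 - i), u ⟨i + m.1, by have := m.2; omega⟩) ≠ 0

/-- A mould is polynomial-valued if each of its components is (the evaluation of)
a polynomial. -/
def IsPolynomial (P : Mould) : Prop :=
  ∀ r : ℕ, ∃ p : MvPolynomial (Fin r) ℚ, ∀ u : Fin r → ℚ, P r u = MvPolynomial.eval u p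

/-- The truncated word `(u_1,…,u_{r-1})`. -/
def init {r : ℕ} (u : Fin r → ℚ) : Fin (r - 1) → ℚ := take u (r - 1) (Nat.sub_le r 1)

/-- The shifted word `(u_2,…,u_r)`. -/
def tail {r : ℕ} (u : Fin r → ℚ) : Fin (r - 1) → ℚ := drop u 1

/-- The word `(u_2, …, u_{r−1}, −u_1−⋯−u_{r−1})`. -/
def pushTail {r : ℕ} (u : Fin r → ℚ) : Fin (r - 1) → ℚ := fun j =>
  if j.1 = r - 2 then -(∑ m : Fin (r - 1), u ⟨m.1, by have := m.2; omega⟩)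
  else u ⟨j.1 + 1, by have := j.2; omega⟩

end Mould

section PolyAux
open MvPolynomial


lemma eval_eq_aeval' {r : ℕ} (u : Fin r → ℚ) (p : MvPolynomial (Fin r) ℚ) :
    eval u p = aeval u p := by
  rw [aeval_def]
  rfl

lemma aeval_aeval' {r : ℕ} (s : Fin r → MvPolynomial (Fin r) ℚ) (u : Fin r → ℚ)
    (p : MvPolynomial (Fin r) ℚ) :
    aeval u (aeval s p) = aeval (fun i => aeval u (s i)) p := by
  have := congrArg (fun φ : MvPolynomial (Fin r) ℚ →ₐ[ℚ] ℚ => φ p)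
    (comp_aeval (f := s) (φ := (aeval u : MvPolynomial (Fin r) ℚ →ₐ[ℚ] ℚ)))
  simpa using this

lemma X_zero_dvd_of_eval {n : ℕ} (g : MvPolynomial (Fin (n+1)) ℚ)
    (h : ∀ u : Fin (n+1) → ℚ, u 0 = 0 → eval u g = 0) :
    X (0 : Fin (n+1)) ∣ g := by
  have h0 : (finSuccEquiv ℚ n g).coeff 0 = 0 := by
    apply MvPolynomial.funext
    intro w
    rw [map_zero]
    have e1 : eval w ((finSuccEquiv ℚ n g).coeff 0)
        = Polynomial.eval 0 (Polynomial.map (eval w) (finSuccEquiv ℚ n g)) := by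
      rw [← Polynomial.coeff_zero_eq_eval_zero, Polynomial.coeff_map]
    rw [e1, ← eval_eq_eval_mv_eval']
    exact h _ (Fin.cons_zero _ _)
  obtain ⟨H, hH⟩ := Polynomial.X_dvd_iff.mpr h0
  refine ⟨(finSuccEquiv ℚ n).symm H, ?_⟩
  have h2 := congrArg (finSuccEquiv ℚ n).symm hH
  rw [AlgEquiv.symm_apply_apply, map_mul] at h2
  rw [h2]
  congr 1
  rw [← finSuccEquiv_X_zero (R := ℚ) (n := n), AlgEquiv.symm_apply_apply]

set_option maxHeartbeats 1000000 in
lemma linSum_dvd_of_eval {n : ℕ} (f : MvPolynomial (Fin (n+1)) ℚ)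
    (h : ∀ u : Fin (n+1) → ℚ, (∑ j, u j) = 0 → eval u f = 0) :
    (∑ j, X j : MvPolynomial (Fin (n+1)) ℚ) ∣ f := by
  set L : MvPolynomial (Fin (n+1)) ℚ := ∑ j, X j with hL
  set s : Fin (n+1) → MvPolynomial (Fin (n+1)) ℚ :=
    fun i => X i + if i = 0 then X 0 - L else 0 with hs
  set t : Fin (n+1) → MvPolynomial (Fin (n+1)) ℚ :=
    fun i => X i + if i = 0 then L - X 0 else 0 with ht
  have hsum_s : ∑ j, s j = X 0 := by
    simp [hs, Finset.sum_add_distrib, Finset.sum_ite_eq', ← hL]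
  have hsum_t : ∑ j, t j = L + L - X 0 := by
    simp only [ht, Finset.sum_add_distrib, Finset.sum_ite_eq', Finset.mem_univ, if_true, ← hL]
    ring
  have hts : ∀ i, aeval t (s i) = X i := by
    intro i
    by_cases hi : i = 0
    · subst hi
      have hsL : s 0 = X 0 + (X 0 - L) := by simp [hs]
      have htL : (aeval t) L = L + L - X 0 := by
        rw [hL, map_sum]
        simp only [aeval_X]
        rw [← hL]
        exact hsum_t
      have ht0 : t 0 = X 0 + (L - X 0) := by simp [ht]
      rw [hsL, map_add, map_sub, aeval_X, htL, ht0]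
      ring
    · simp [hs, ht, hi]
  -- g = σ f vanishes when u 0 = 0
  have hg : ∀ u : Fin (n+1) → ℚ, u 0 = 0 → eval u (aeval s f) = 0 := by
    intro u hu
    rw [eval_eq_aeval', aeval_aeval', ← eval_eq_aeval']
    · apply h
      have : ∀ i, (MvPolynomial.aeval u) (s i) = u i + if i = 0 then u 0 - (∑ j, u j) else 0 := by
        intro i
        by_cases hi : i = 0 <;> simp [hs, hi, hL]
      rw [funext this, Finset.sum_add_distrib,
        Finset.sum_ite_eq' Finset.univ (0 : Fin (n+1))]
      simp [hu]
  obtain ⟨H, hH⟩ := X_zero_dvd_of_eval (aeval s f) hg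
  refine ⟨aeval t H, ?_⟩
  have : aeval t (aeval s f) = f := by
    have e : ∀ (p : MvPolynomial (Fin (n+1)) ℚ), aeval t (aeval s p) = p := by
      intro p
      have := congrArg (fun φ : MvPolynomial (Fin (n+1)) ℚ →ₐ[ℚ] MvPolynomial (Fin (n+1)) ℚ => φ p)
        (comp_aeval (f := s) (φ := (aeval t : MvPolynomial (Fin (n+1)) ℚ →ₐ[ℚ] MvPolynomial (Fin (n+1)) ℚ)))
      have e : aeval t ((aeval s) p) = (aeval fun i => aeval t (s i)) p := by
        rw [← AlgHom.comp_apply, comp_aeval]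
      rw [e, funext hts, aeval_X_left]
      rfl
    exact e f
  rw [← this, hH, map_mul]
  congr 1
  rw [aeval_X]
  have ht0 : t 0 = X 0 + (L - X 0) := by simp [ht]
  rw [ht0]
  ring


lemma eq_zero_of_generic_eval {r : ℕ} (f : MvPolynomial (Fin r) ℚ)
    (h : ∀ u : Fin r → ℚ, Mould.Generic u → eval u f = 0) : f = 0 := by
  classical
  set D : MvPolynomial (Fin r) ℚ := ∏ p : Fin r × Fin r,
    if p.1.1 ≤ p.2.1 then
      ∑ m : Fin (p.2.1 + 1 - p.1.1), X (⟨p.1.1 + m.1, by have := m.2; have := p.2.2; omega⟩ : Fin r)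
    else 1 with hD
  have hD0 : ∀ u : Fin r → ℚ, ¬ Mould.Generic u → eval u D = 0 := by
    intro u hng
    simp only [Mould.Generic, not_forall, not_not] at hng
    obtain ⟨i, j, hij, hjr, hsum⟩ := hng
    rw [hD, map_prod]
    refine Finset.prod_eq_zero (Finset.mem_univ ((⟨i, by omega⟩ : Fin r), (⟨j, hjr⟩ : Fin r))) ?_
    rw [if_pos hij, map_sum]
    simp only [eval_X]
    exact hsum
  have hfD : f * D = 0 := by
    apply MvPolynomial.funext
    intro u
    rw [map_mul, map_zero]
    by_cases hg : Mould.Generic u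
    · rw [h u hg, zero_mul]
    · rw [hD0 u hg, mul_zero]
  have hDne : D ≠ 0 := by
    intro h0
    have h1 : eval (fun _ => (1:ℚ)) D = 0 := by rw [h0, map_zero]
    rw [hD, map_prod] at h1
    have h2 : ∀ p : Fin r × Fin r, (0:ℚ) < eval (fun _ => (1:ℚ))
        (if p.1.1 ≤ p.2.1 then
          ∑ m : Fin (p.2.1 + 1 - p.1.1), X (⟨p.1.1 + m.1, by have := m.2; have := p.2.2; omega⟩ : Fin r)
        else 1) := by
      intro p
      by_cases hp : p.1.1 ≤ p.2.1
      · rw [if_pos hp, map_sum]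
        simp only [eval_X]
        have : ∑ _m : Fin (p.2.1 + 1 - p.1.1), (1:ℚ) = (p.2.1 + 1 - p.1.1 : ℕ) := by
          simp
        rw [this]
        have : 0 < p.2.1 + 1 - p.1.1 := by omega
        exact_mod_cast this
      · rw [if_neg hp, map_one]; norm_num
    have := Finset.prod_pos (s := (Finset.univ : Finset (Fin r × Fin r))) (fun p _ => h2 p)
    rw [h1] at this
    exact lt_irrefl 0 this
  rcases mul_eq_zero.mp hfD with h1 | h1
  · exact h1
  · exact absurd h1 hDne

end PolyAux

namespace Mould

lemma darInv_Bm_eq_zero {n : ℕ} (hn : n ≠ 1) (v : Fin n → ℚ) : darInv Bm n v = 0 := by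
  simp [darInv, Bm, hn]

lemma darInv_Bm_eq_one {n : ℕ} (hn : n = 1) (h0 : 0 < n) (v : Fin n → ℚ) :
    darInv Bm n v = 1 / v ⟨0, h0⟩ := by
  subst hn
  simp [darInv, Bm]

lemma mu_darInvBm_right (A : Mould) {s : ℕ} (u : Fin (s+2) → ℚ) :
    mu A (darInv Bm) (s+2) u = A (s+1) (init u) / u ⟨s+1, by omega⟩ := by
  rw [mu, Finset.sum_eq_single_of_mem (⟨s+1, by omega⟩ : Fin (s+3)) (Finset.mem_univ _)]
  · rw [darInv_Bm_eq_one (by show s + 2 - (s+1) = 1; omega) (by show 0 < s + 2 - (s+1); omega)]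
    rw [div_eq_mul_inv, one_mul, div_eq_mul_inv]
    rfl
  · intro b _ hb
    rcases Nat.lt_or_ge b.1 (s+1) with hb1 | hb1
    · rw [darInv_Bm_eq_zero (by omega), mul_zero]
    · have hb2 : b.1 = s + 2 := by
        have := b.2
        rcases Nat.lt_or_ge b.1 (s+2) with h' | h'
        · exact absurd (Fin.ext (by show b.1 = s + 1; omega) : b = ⟨s+1, by omega⟩) hb
        · omega
      rw [darInv_Bm_eq_zero (by omega), mul_zero]

set_option maxHeartbeats 800000 in
lemma mu_darInvBm_left (A : Mould) {s : ℕ} (u : Fin (s+2) → ℚ) :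
    mu (darInv Bm) A (s+2) u = (1 / u ⟨0, by omega⟩) * A (s+1) (tail u) := by
  rw [mu, Finset.sum_eq_single_of_mem (⟨1, by omega⟩ : Fin (s+3)) (Finset.mem_univ _)]
  · rw [darInv_Bm_eq_one (by show (1:ℕ) = 1; rfl) (by show 0 < 1; omega)]
    rfl
  · intro b _ hb
    have hb1 : b.1 ≠ 1 := fun h => hb (Fin.ext h)
    rw [darInv_Bm_eq_zero hb1, zero_mul]





lemma blockSum_eq_sum {s : ℕ} (u : Fin (s+2) → ℚ) (f : Fin (s+2) → ℚ)
    (hf : ∀ m : Fin (s+2), f m = u ⟨0 + m.1, by have := m.2; omega⟩) :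
    ∑ m, f m = ∑ j, u j := by
  refine Finset.sum_congr rfl fun m _ => ?_
  rw [hf m]
  congr 1
  exact Fin.ext (Nat.zero_add _)

lemma arit_darInvBm (A : Mould) {s : ℕ} (u : Fin (s+2) → ℚ) :
    arit A (darInv Bm) (s+2) u =
      A (s+1) (init u) / (∑ j, u j) - A (s+1) (tail u) / (∑ j, u j) := by
  rw [arit]
  have h1 : (∑ i : Fin (s+2+1), ∑ k : Fin (s+2+1),
      if h : i.1 < k.1 ∧ k.1 < s+2 then
        darInv Bm (i.1 + (s+2 - k.1)) (flexUpper u i.1 k.1 h.1 h.2)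
          * A (k.1 - i.1) (blockWord u i.1 k.1 (le_of_lt h.2))
      else 0) = A (s+1) (init u) / (∑ j, u j) := by
    rw [Finset.sum_eq_single_of_mem (⟨0, by omega⟩ : Fin (s+3)) (Finset.mem_univ _)]
    · rw [Finset.sum_eq_single_of_mem (⟨s+1, by omega⟩ : Fin (s+3)) (Finset.mem_univ _)]
      · rw [dif_pos (⟨by show (0:ℕ) < s+1; omega, by show s+1 < s+2; omega⟩ :
          (⟨0, by omega⟩ : Fin (s+3)).1 < (⟨s+1, by omega⟩ : Fin (s+3)).1 ∧
            (⟨s+1, by omega⟩ : Fin (s+3)).1 < s+2)]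
        rw [darInv_Bm_eq_one (by show 0 + (s+2 - (s+1)) = 1; omega)
          (by show 0 < 0 + (s+2 - (s+1)); omega)]
        have hflex : ∀ (h0 : (0:ℕ) < s+1) (h1 : s+1 < s+2)
            (hlt : 0 < 0 + (s+2 - (s+1))),
            flexUpper u 0 (s+1) h0 h1 ⟨0, hlt⟩ = ∑ j, u j := by
          intro h0 h1 hlt
          rw [flexUpper]
          rw [dif_neg (by omega), dif_pos rfl]
          exact blockSum_eq_sum u _ (fun m => rfl)
        have hbw : ∀ (h : s+1 ≤ s+2), blockWord u 0 (s+1) h = init u := by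
          intro h
          funext m
          show u _ = u _
          congr 1
          exact Fin.ext (Nat.zero_add _)
        rw [hflex, hbw]
        rw [div_eq_mul_inv, one_mul, div_eq_mul_inv, mul_comm]
        rfl
      · intro k _ hk
        have hk1 : k.1 ≠ s+1 := fun h => hk (Fin.ext h)
        split_ifs with h
        · rw [darInv_Bm_eq_zero (by omega), zero_mul]
        · rfl
    · intro i _ hi
      have hi1 : i.1 ≠ 0 := fun h => hi (Fin.ext h)
      refine Finset.sum_eq_zero fun k _ => ?_
      split_ifs with h
      · rw [darInv_Bm_eq_zero (by omega), zero_mul]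
      · rfl
  have h2 : (∑ i : Fin (s+2+1), ∑ k : Fin (s+2+1),
      if h : 0 < i.1 ∧ i.1 < k.1 ∧ k.1 ≤ s+2 then
        darInv Bm (i.1 + (s+2 - k.1)) (flexLower u i.1 k.1 h.1 h.2.1 h.2.2)
          * A (k.1 - i.1) (blockWord u i.1 k.1 h.2.2)
      else 0) = A (s+1) (tail u) / (∑ j, u j) := by
    rw [Finset.sum_eq_single_of_mem (⟨1, by omega⟩ : Fin (s+3)) (Finset.mem_univ _)]
    · rw [Finset.sum_eq_single_of_mem (⟨s+2, by omega⟩ : Fin (s+3)) (Finset.mem_univ _)]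
      · rw [dif_pos (⟨by show (0:ℕ) < 1; omega, by show (1:ℕ) < s+2; omega,
          by show s+2 ≤ s+2; omega⟩ :
          (0 < (⟨1, by omega⟩ : Fin (s+3)).1 ∧ (⟨1, by omega⟩ : Fin (s+3)).1 <
            (⟨s+2, by omega⟩ : Fin (s+3)).1 ∧ (⟨s+2, by omega⟩ : Fin (s+3)).1 ≤ s+2))]
        rw [darInv_Bm_eq_one (by show 1 + (s+2 - (s+2)) = 1; omega)
          (by show 0 < 1 + (s+2 - (s+2)); omega)]
        have hflex : ∀ (h0 : (0:ℕ) < 1) (h1 : (1:ℕ) < s+2) (h2 : s+2 ≤ s+2)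
            (hlt : 0 < 1 + (s+2 - (s+2))),
            flexLower u 1 (s+2) h0 h1 h2 ⟨0, hlt⟩ = ∑ j, u j := by
          intro h0 h1 h2 hlt
          rw [flexLower]
          rw [dif_neg (by omega), dif_pos (by omega)]
          exact blockSum_eq_sum u _ (fun m => rfl)
        rw [hflex]
        rw [div_eq_mul_inv, one_mul, div_eq_mul_inv, mul_comm]
        rfl
      · intro k _ hk
        have hk1 : k.1 ≠ s+2 := fun h => hk (Fin.ext h)
        split_ifs with h
        · rw [darInv_Bm_eq_zero (by omega), zero_mul]
        · rfl
    · intro i _ hi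
      have hi1 : i.1 ≠ 1 := fun h => hi (Fin.ext h)
      refine Finset.sum_eq_zero fun k _ => ?_
      split_ifs with h
      · rw [darInv_Bm_eq_zero (by omega), zero_mul]
      · rfl
  rw [h1, h2]

lemma generic_sum_ne {s : ℕ} (u : Fin (s+2) → ℚ) (hg : Generic u) :
    (∑ j, u j) ≠ 0 := by
  have h0 := hg 0 (s+1) (by omega) (by omega)
  exact fun hc => h0 ((blockSum_eq_sum u _ fun m => rfl).trans hc)

lemma generic_sum_init_ne {s : ℕ} (u : Fin (s+2) → ℚ) (hg : Generic u) :
    (∑ j, init u j) ≠ 0 := by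
  have h0 := hg 0 s (by omega) (by omega)
  refine fun hc => h0 ?_
  rw [← hc]
  refine Finset.sum_congr rfl fun m _ => ?_
  show u _ = u _
  congr 1
  exact Fin.ext (Nat.zero_add _)

lemma generic_sum_tail_ne {s : ℕ} (u : Fin (s+2) → ℚ) (hg : Generic u) :
    (∑ j, tail u j) ≠ 0 := by
  have h0 := hg 1 (s+1) (by omega) (by omega)
  refine fun hc => h0 ?_
  rw [← hc]
  exact Finset.sum_congr rfl fun m _ => rfl

lemma generic_ne {s : ℕ} (u : Fin (s+2) → ℚ) (hg : Generic u) (i : Fin (s+2)) :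
    u i ≠ 0 := by
  have h0 := hg i.1 i.1 le_rfl i.2
  refine fun hc => h0 ?_
  set F : ℕ → ℚ := fun x => if hx : x < s+2 then u ⟨x, hx⟩ else 0 with hF
  have e1 : (∑ m : Fin (i.1+1-i.1), u ⟨i.1 + m.1, by have := m.2; omega⟩)
      = ∑ m : Fin (i.1+1-i.1), F (i.1 + m.1) := by
    refine Finset.sum_congr rfl fun m _ => ?_
    show _ = if hx : i.1 + m.1 < s+2 then u ⟨i.1 + m.1, hx⟩ else 0
    rw [dif_pos (show i.1 + m.1 < s+2 by have := m.2; omega)]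
  rw [e1, Fin.sum_univ_eq_sum_range (fun m => F (i.1 + m)) (i.1+1-i.1),
    show i.1+1-i.1 = 1 by omega, Finset.sum_range_one]
  have hlt : i.1 + 0 < s + 2 := by omega
  have e2 : F (i.1 + 0) = u ⟨i.1 + 0, hlt⟩ := dif_pos hlt
  rw [e2, show (⟨i.1 + 0, hlt⟩ : Fin (s+2)) = i from Fin.ext (show i.1 + 0 = i.1 by omega), hc]

lemma key_algebra (p1 p2 A B S PI PT x y Pu : ℚ) (hA : A ≠ 0) (hB : B ≠ 0)
    (hS : S ≠ 0) (hPI : PI ≠ 0) (hPT : PT ≠ 0) (hx : x ≠ 0) (hy : y ≠ 0)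
    (h1 : S = A + y) (h2 : S = x + B) (h3 : Pu = y * PI) (h4 : Pu = x * PT) :
    -(Pu * ((p1/A/PI/S - p2/B/PT/S) - (p1/A/PI/y - (1/x)*(p2/B/PT)))) = (p1 - p2)/S := by
  subst h1 h3
  have hB' : B = A + y - x := by linarith
  subst hB'
  have hPT' : PT = y * PI / x := by rw [eq_div_iff hx]; linarith
  subst hPT'
  field_simp
  ring

lemma Darit_Bm_eval (P : Mould) {s : ℕ} (u : Fin (s+2) → ℚ) (hg : Generic u) :
    Darit P Bm (s+2) u = (P (s+1) (init u) - P (s+1) (tail u)) / (∑ j, u j) := by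
  have hdi : ∀ (n : ℕ) (v : Fin n → ℚ),
      deltaInv P n v = P n v / (∑ j, v j) / (∏ j, v j) := fun n v => rfl
  have hS := generic_sum_ne u hg
  have hA := generic_sum_init_ne u hg
  have hB := generic_sum_tail_ne u hg
  have hx := generic_ne u hg ⟨0, by omega⟩
  have hy := generic_ne u hg ⟨s+1, by omega⟩
  have hPI : (∏ j, init u j) ≠ 0 :=
    Finset.prod_ne_zero_iff.mpr fun j _ => generic_ne u hg _
  have hPT : (∏ j, tail u j) ≠ 0 :=
    Finset.prod_ne_zero_iff.mpr fun j _ => generic_ne u hg _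
  have hprod1 : (∏ j, u j) = u ⟨s+1, by omega⟩ * ∏ j, init u j := by
    rw [Fin.prod_univ_castSucc, mul_comm]
    rfl
  have hprod2 : (∏ j, u j) = u ⟨0, by omega⟩ * ∏ j, tail u j := by
    rw [Fin.prod_univ_succ]
    congr 1
    refine Finset.prod_congr rfl fun i _ => ?_
    show u _ = u _
    congr 1
    exact Fin.ext (Nat.add_comm _ _)
  have hsum1 : (∑ j, u j) = (∑ j, init u j) + u ⟨s+1, by omega⟩ := by
    rw [Fin.sum_univ_castSucc]
    rfl
  have hsum2 : (∑ j, u j) = u ⟨0, by omega⟩ + ∑ j, tail u j := by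
    rw [Fin.sum_univ_succ]
    congr 1
    refine Finset.sum_congr rfl fun i _ => ?_
    show u _ = u _
    congr 1
    exact Fin.ext (Nat.add_comm _ _)
  show -(dar _ (s+2) u) = _
  rw [dar]
  show -((∏ j, u j) * (arit (deltaInv P) (darInv Bm) (s+2) u
      - lu (deltaInv P) (darInv Bm) (s+2) u)) = _
  rw [lu, arit_darInvBm, mu_darInvBm_right, mu_darInvBm_left, hdi, hdi]
  exact key_algebra (P (s+1) (init u)) (P (s+1) (tail u)) _ _ _ _ _ _ _ _
    hA hB hS hPI hPT hx hy hsum1 hsum2 hprod1 hprod2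

lemma sum_eq_tail {s : ℕ} (u : Fin (s+2) → ℚ) :
    (∑ j, u j) = u ⟨0, by omega⟩ + ∑ j, tail u j := by
  rw [Fin.sum_univ_succ]
  congr 1
  refine Finset.sum_congr rfl fun i _ => ?_
  show u _ = u _
  congr 1
  exact Fin.ext (Nat.add_comm _ _)

lemma Darit_Bm_zero (P : Mould) (u : Fin 0 → ℚ) : Darit P Bm 0 u = 0 := by
  simp [Darit, dar, arit, lu, mu, deltaInv, darInv, durInv, Bm]

lemma Darit_Bm_one (P : Mould) (u : Fin 1 → ℚ) : Darit P Bm 1 u = 0 := by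
  have hA0 : ∀ v : Fin 0 → ℚ, deltaInv P 0 v = 0 := by
    intro v
    simp [deltaInv, darInv, durInv]
  simp [Darit, dar, arit, lu, mu, Bm, darInv, Fin.sum_univ_succ, hA0]

lemma push_tail_eq_init {s : ℕ} (P : Mould) (u : Fin (s+2) → ℚ) (hsum : ∑ j, u j = 0) :
    push P (s+1) (tail u) = P (s+1) (init u) := by
  rw [push]
  congr 1
  funext j
  by_cases hj : j.1 = 0
  · rw [if_pos hj]
    have h0 : u ⟨0, by omega⟩ + ∑ k, tail u k = 0 := by rw [← sum_eq_tail]; exact hsum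
    have h1 : -(∑ k, tail u k) = u ⟨0, by omega⟩ := by linarith
    have h2 : -(∑ k : Fin (s+1), tail u k) = u ⟨0, by omega⟩ := h1
    rw [h2]
    show u _ = u _
    congr 1
    refine Fin.ext ?_
    show (0:ℕ) = j.1
    omega
  · rw [if_neg hj]
    show u _ = u _
    congr 1
    refine Fin.ext ?_
    show 1 + (j.1 - 1) = j.1
    omega

lemma tail_cons {s : ℕ} (v : Fin (s+1) → ℚ) (a : ℚ) :
    tail (Fin.cons a v : Fin (s+2) → ℚ) = v := by
  funext j
  show (Fin.cons a v : Fin (s+2) → ℚ) ⟨1 + j.1, _⟩ = v j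
  have e : (⟨1 + j.1, by have := j.2; omega⟩ : Fin (s+2)) = Fin.succ j :=
    Fin.ext (by show 1 + j.1 = j.1 + 1; omega)
  rw [e, Fin.cons_succ]

lemma sum_cons_eq_zero {s : ℕ} (v : Fin (s+1) → ℚ) :
    (∑ j, (Fin.cons (-∑ k, v k) v : Fin (s+2) → ℚ) j) = 0 := by
  rw [Fin.sum_univ_succ, Fin.cons_zero]
  simp [Fin.cons_succ]

lemma push_eq_P_init_cons {s : ℕ} (P : Mould) (v : Fin (s+1) → ℚ) :
    push P (s+1) v = P (s+1) (init (Fin.cons (-∑ k, v k) v : Fin (s+2) → ℚ)) := by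
  rw [push]
  congr 1
  funext j
  by_cases hj : j.1 = 0
  · rw [if_pos hj]
    show _ = (Fin.cons (-∑ k, v k) v : Fin (s+2) → ℚ) ⟨j.1, _⟩
    have e : (⟨j.1, by have := j.2; omega⟩ : Fin (s+2)) = 0 := Fin.ext hj
    rw [e, Fin.cons_zero]
  · rw [if_neg hj]
    show _ = (Fin.cons (-∑ k, v k) v : Fin (s+2) → ℚ) ⟨j.1, _⟩
    have e : (⟨j.1, by have := j.2; omega⟩ : Fin (s+2)) = Fin.succ ⟨j.1 - 1, by have := j.2; omega⟩ :=
      Fin.ext (by show j.1 = (j.1 - 1) + 1; omega)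
    rw [e, Fin.cons_succ]

end Mould

open Mould in
/-- Let `P ∈ ARI` be a polynomial-valued mould. Then the mould
`Darit(P)·B` is polynomial-valued (i.e. each of its components agrees with a
polynomial at every generic tuple — being rational-function valued, it is then
polynomial) if and only if `P` is push-invariant, where `B` is the mould
concentrated in depth 1 with `B(u_1) = 1`. -/
theorem Darit_B_polynomial_iff_push_invariant (P : Mould) (hP : MemARI P)
    (hPpol : IsPolynomial P) :
    (∀ r : ℕ, ∃ q : MvPolynomial (Fin r) ℚ, ∀ u : Fin r → ℚ, Generic u →
        Darit P Bm r u = MvPolynomial.eval u q) ↔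
      (∀ (r : ℕ) (u : Fin r → ℚ), push P r u = P r u) := by
  classical
  have evalL : ∀ (r : ℕ) (u : Fin r → ℚ),
      MvPolynomial.eval u (∑ j, MvPolynomial.X j) = ∑ j, u j := by
    intro r u
    rw [map_sum]
    simp
  have hevf : ∀ (s : ℕ) (p : MvPolynomial (Fin (s+1)) ℚ)
      (hp : ∀ v : Fin (s+1) → ℚ, P (s+1) v = MvPolynomial.eval v p)
      (u : Fin (s+2) → ℚ),
      MvPolynomial.eval u
        (MvPolynomial.rename (fun j : Fin (s+1) => (⟨j.1, by have := j.2; omega⟩ : Fin (s+2))) p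
          - MvPolynomial.rename (fun j : Fin (s+1) => (⟨1 + j.1, by have := j.2; omega⟩ : Fin (s+2))) p)
        = P (s+1) (init u) - P (s+1) (tail u) := by
    intro s p hp u
    rw [map_sub, MvPolynomial.eval_rename, MvPolynomial.eval_rename]
    have h1 : (u ∘ fun j : Fin (s+1) => (⟨j.1, by have := j.2; omega⟩ : Fin (s+2))) = init u :=
      funext fun j => rfl
    have h2 : (u ∘ fun j : Fin (s+1) => (⟨1 + j.1, by have := j.2; omega⟩ : Fin (s+2))) = tail u :=
      funext fun j => rfl
    rw [h1, h2, ← hp, ← hp]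
  constructor
  · intro H s'
    rcases s' with _ | t
    · intro v
      show P 0 _ = P 0 v
      congr 1
      funext j
      exact j.elim0
    · intro v
      obtain ⟨q, hq⟩ := H (t+2)
      obtain ⟨p, hp⟩ := hPpol (t+1)
      set f : MvPolynomial (Fin (t+2)) ℚ :=
        MvPolynomial.rename (fun j : Fin (t+1) => (⟨j.1, by have := j.2; omega⟩ : Fin (t+2))) p
          - MvPolynomial.rename (fun j : Fin (t+1) => (⟨1 + j.1, by have := j.2; omega⟩ : Fin (t+2))) p
        with hf
      have hfq : f = (∑ j, MvPolynomial.X j) * q := by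
        have hz : f - (∑ j, MvPolynomial.X j) * q = 0 := by
          apply eq_zero_of_generic_eval
          intro u hgen
          rw [map_sub, map_mul, hf, hevf t p hp u, evalL]
          have hS := generic_sum_ne u hgen
          have e1 := (hq u hgen).symm.trans (Darit_Bm_eval P u hgen)
          rw [e1, mul_div_cancel₀ _ hS, sub_self]
        have := sub_eq_zero.mp hz
        exact this
      have hfu : MvPolynomial.eval (Fin.cons (-∑ k, v k) v : Fin (t+2) → ℚ) f = 0 := by
        rw [hfq, map_mul, evalL, sum_cons_eq_zero, zero_mul]
      rw [hf, hevf t p hp] at hfu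
      have hPinit : P (t+1) (init (Fin.cons (-∑ k, v k) v : Fin (t+2) → ℚ))
          = P (t+1) (tail (Fin.cons (-∑ k, v k) v : Fin (t+2) → ℚ)) := by linarith
      rw [push_eq_P_init_cons, hPinit, tail_cons]
  · intro hpush r
    rcases r with _ | (_ | s)
    · exact ⟨0, fun u _ => by rw [Darit_Bm_zero, map_zero]⟩
    · exact ⟨0, fun u _ => by rw [Darit_Bm_one, map_zero]⟩
    · obtain ⟨p, hp⟩ := hPpol (s+1)
      set f : MvPolynomial (Fin (s+2)) ℚ :=
        MvPolynomial.rename (fun j : Fin (s+1) => (⟨j.1, by have := j.2; omega⟩ : Fin (s+2))) p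
          - MvPolynomial.rename (fun j : Fin (s+1) => (⟨1 + j.1, by have := j.2; omega⟩ : Fin (s+2))) p
        with hf
      have hvan : ∀ u : Fin (s+2) → ℚ, (∑ j, u j) = 0 → MvPolynomial.eval u f = 0 := by
        intro u hsum
        rw [hf, hevf s p hp]
        rw [← push_tail_eq_init P u hsum, hpush, sub_self]
      obtain ⟨q, hq⟩ := linSum_dvd_of_eval f hvan
      refine ⟨q, fun u hgen => ?_⟩
      have hS := generic_sum_ne u hgen
      rw [Darit_Bm_eval P u hgen, div_eq_iff hS]
      have e1 := congrArg (MvPolynomial.eval u) hq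
      rw [hf, hevf s p hp, map_mul, evalL] at e1
      rw [e1]
      ring
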